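/- Suppose f : 2^[m] → ℝ is monotone (f(S) ≤ f(T) whenever S ⊆ T), submodular, and f(∅) = 0. Let the greedy ordering π_ALG be built by repeatedly adding the element with maximum marginal gain, i.e., ALG^{j+1} = ALG^j ∪ {argmax_{e ∉ ALG^j} f(ALG^j ∪ {e})}. Then f([m]) · (1 − (1 − 1/m)^j) ≤ f(ALG^j) for every j ∈ [m]. -/

import Mathlib

lemma submodular_marginal_sum (m : ℕ) (f : Finset (Fin m) → ℝ)
    (hsub : ∀ S T, f S + f T ≥ f (S ∪ T) + f (S ∩ T)) :
    ∀ T S : Finset (Fin m), f (S ∪ T) ≤ f S + ∑ e ∈ T \ S, (f (insert e S) - f S) := by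
  intro T
  induction T using Finset.induction with
  | empty => intro S; simp
  | @insert a T ha ih =>
    intro S
    by_cases haS : a ∈ S
    · have h1 : S ∪ insert a T = S ∪ T := by
        ext x; simp only [Finset.mem_union, Finset.mem_insert]
        constructor
        · rintro (h | rfl | h) <;> simp_all
        · rintro (h | h) <;> simp_all
      have h2 : insert a T \ S = T \ S := by
        ext x; simp only [Finset.mem_sdiff, Finset.mem_insert]
        constructor
        · rintro ⟨rfl | h, hx⟩ <;> simp_all
        · rintro ⟨h, hx⟩; exact ⟨Or.inr h, hx⟩
      rw [h1, h2]; exact ih S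
    · by_cases haT : a ∈ T
      · exact absurd haT ha
      have hunion : (S ∪ T) ∪ insert a S = insert a (S ∪ T) := by
        ext x; simp only [Finset.mem_union, Finset.mem_insert]; tauto
      have hinter : (S ∪ T) ∩ insert a S = S := by
        ext x; simp only [Finset.mem_inter, Finset.mem_union, Finset.mem_insert]
        constructor
        · rintro ⟨h1, rfl | h2⟩
          · rcases h1 with h | h
            · exact absurd h haS
            · exact absurd h haT
          · exact h2
        · intro h; exact ⟨Or.inl h, Or.inr h⟩
      have key := hsub (S ∪ T) (insert a S)
      rw [hunion, hinter] at key
      have h3 : S ∪ insert a T = insert a (S ∪ T) := by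
        ext x; simp only [Finset.mem_union, Finset.mem_insert]; tauto
      have h4 : insert a T \ S = insert a (T \ S) := by
        ext x; simp only [Finset.mem_sdiff, Finset.mem_insert]
        constructor
        · rintro ⟨rfl | h, hx⟩
          · exact Or.inl rfl
          · exact Or.inr ⟨h, hx⟩
        · rintro (rfl | ⟨h, hx⟩)
          · exact ⟨Or.inl rfl, haS⟩
          · exact ⟨Or.inr h, hx⟩
      have haTS : a ∉ T \ S := by simp [haT]
      rw [h3, h4, Finset.sum_insert haTS]
      have := ih S
      linarith

/-- Nemhauser–Wolsey–Fisher-style guarantee: if `f` is monotone, submodular and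
`f(∅) = 0`, and `ALG^j` are the greedy sets (each step adds an element of
maximum marginal gain), then `f([m]) · (1 − (1 − 1/m)^j) ≤ f(ALG^j)` for every
`j ∈ [m]`. -/
theorem greedy_submodular_guarantee (m : ℕ) (hm : 0 < m)
    (f : Finset (Fin m) → ℝ)
    (hmono : ∀ S T, S ⊆ T → f S ≤ f T)
    (hsub : ∀ S T, f S + f T ≥ f (S ∪ T) + f (S ∩ T))
    (hempty : f ∅ = 0)
    (A : ℕ → Finset (Fin m))
    (hA0 : A 0 = ∅)
    (hgreedy : ∀ j < m, ∃ e ∉ A j, A (j + 1) = insert e (A j) ∧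
      ∀ e' ∉ A j, f (insert e' (A j)) ≤ f (insert e (A j))) :
    ∀ j, 1 ≤ j → j ≤ m →
      f Finset.univ * (1 - (1 - 1 / (m : ℝ)) ^ j) ≤ f (A j) := by
  have hmR : (0 : ℝ) < m := by exact_mod_cast hm
  have hfuniv : 0 ≤ f Finset.univ := by
    rw [← hempty]; exact hmono _ _ (Finset.empty_subset _)
  have hr : (0 : ℝ) ≤ 1 - 1 / m := by
    rw [sub_nonneg]
    rw [div_le_one hmR]
    exact_mod_cast hm
  -- step inequality
  have step : ∀ j < m, f Finset.univ - f (A (j + 1)) ≤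
      (1 - 1 / m) * (f Finset.univ - f (A j)) := by
    intro j hj
    obtain ⟨e, he, hA1, hmax⟩ := hgreedy j hj
    have hd : 0 ≤ f (A (j + 1)) - f (A j) := by
      rw [hA1]
      have := hmono (A j) (insert e (A j)) (Finset.subset_insert _ _)
      linarith
    have hsum := submodular_marginal_sum m f hsub Finset.univ (A j)
    rw [show A j ∪ Finset.univ = Finset.univ by simp] at hsum
    have hbound : ∑ e' ∈ Finset.univ \ A j, (f (insert e' (A j)) - f (A j)) ≤
        (m : ℝ) * (f (A (j + 1)) - f (A j)) := by
      have h1 : ∑ e' ∈ Finset.univ \ A j, (f (insert e' (A j)) - f (A j)) ≤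
          ∑ _e' ∈ Finset.univ \ A j, (f (A (j + 1)) - f (A j)) := by
        apply Finset.sum_le_sum
        intro x hx
        have hxA : x ∉ A j := (Finset.mem_sdiff.mp hx).2
        have := hmax x hxA
        rw [hA1]; linarith
      rw [Finset.sum_const, nsmul_eq_mul] at h1
      calc ∑ e' ∈ Finset.univ \ A j, (f (insert e' (A j)) - f (A j))
          ≤ ((Finset.univ \ A j).card : ℝ) * (f (A (j + 1)) - f (A j)) := h1
        _ ≤ (m : ℝ) * (f (A (j + 1)) - f (A j)) := by
            apply mul_le_mul_of_nonneg_right _ hd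
            exact_mod_cast Finset.card_le_card (Finset.subset_univ _) |>.trans
              (by simp)
    have hkey : f Finset.univ - f (A j) ≤ (m : ℝ) * (f (A (j + 1)) - f (A j)) := by
      linarith
    have h1m : (1 - 1 / (m : ℝ)) * (f Finset.univ - f (A j)) =
        (f Finset.univ - f (A j)) - (f Finset.univ - f (A j)) / m := by
      field_simp
    rw [h1m]
    have : (f Finset.univ - f (A j)) / m ≤ f (A (j + 1)) - f (A j) := by
      rw [div_le_iff₀ hmR]
      linarith [hkey]
    linarith
  -- main induction
  have main : ∀ j, j ≤ m → f Finset.univ - f (A j) ≤ (1 - 1 / m) ^ j * f Finset.univ := by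
    intro j
    induction j with
    | zero => intro _; simp [hA0, hempty]
    | succ k ih =>
      intro hk
      have hkm : k < m := hk
      have h1 := step k hkm
      have h2 := ih (le_of_lt hkm)
      calc f Finset.univ - f (A (k + 1))
          ≤ (1 - 1 / m) * (f Finset.univ - f (A k)) := h1
        _ ≤ (1 - 1 / m) * ((1 - 1 / m) ^ k * f Finset.univ) :=
            mul_le_mul_of_nonneg_left h2 hr
        _ = (1 - 1 / m) ^ (k + 1) * f Finset.univ := by ring
  intro j _ hjm
  have := main j hjm
  nlinarith [this]
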